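/- Let K be a field, n = d⁺ + d⁻ with d⁺, d⁻ ≥ 0, and define f⁺(X) to be the determinant of the top-left d⁺×d⁺ block of an n×n matrix X. Then for every lower triangular n×n matrix L, every n×n matrix A, and every block diagonal matrix D = diag(B, C) with B ∈ GL_{d⁺}(K) and C ∈ GL_{d⁻}(K), one has f⁺(L·A·D) = (∏_{i=1}^{d⁺} L_{ii}) · det(B) · f⁺(A). -/
import Mathlib

lemma castAdd_lt_natAdd (dp dm : ℕ) (i : Fin dp) (k : Fin dm) :
    Fin.castAdd dm i < Fin.natAdd dp k := by
  simp only [Fin.lt_def, Fin.coe_castAdd, Fin.coe_natAdd]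
  omega

/-- Transformation law for Yoshida's admissible polynomial `f⁺` (determinant of
the top-left `d⁺×d⁺` block): `f⁺(L·A·diag(B,C)) = (∏ L_ii over i ≤ d⁺) · det B · f⁺(A)`
for `L` lower triangular and `B ∈ GL_{d⁺}`, `C ∈ GL_{d⁻}`. -/
theorem fplus_transformation {K : Type*} [Field K] (dp dm : ℕ)
    (L A : Matrix (Fin (dp + dm)) (Fin (dp + dm)) K)
    (hL : ∀ i j : Fin (dp + dm), i < j → L i j = 0)
    (B : Matrix (Fin dp) (Fin dp) K) (C : Matrix (Fin dm) (Fin dm) K)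
    (hB : IsUnit B.det) (hC : IsUnit C.det) :
    ((L * A * ((Matrix.fromBlocks B 0 0 C).submatrix finSumFinEquiv.symm finSumFinEquiv.symm)).submatrix
        (Fin.castAdd dm) (Fin.castAdd dm)).det =
      (∏ i : Fin dp, L (Fin.castAdd dm i) (Fin.castAdd dm i)) * B.det *
        (A.submatrix (Fin.castAdd dm) (Fin.castAdd dm)).det := by
  have key : ((L * A * ((Matrix.fromBlocks B 0 0 C).submatrix finSumFinEquiv.symm
      finSumFinEquiv.symm)).submatrix (Fin.castAdd dm) (Fin.castAdd dm)) =
      (L.submatrix (Fin.castAdd dm) (Fin.castAdd dm)) *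
        (A.submatrix (Fin.castAdd dm) (Fin.castAdd dm)) * B := by
    ext i j
    simp only [Matrix.submatrix_apply, Matrix.mul_apply]
    rw [Fin.sum_univ_add]
    simp only [Matrix.submatrix_apply, finSumFinEquiv_symm_apply_castAdd,
      finSumFinEquiv_symm_apply_natAdd, Matrix.fromBlocks_apply₁₁,
      Matrix.fromBlocks_apply₂₁, Matrix.zero_apply, mul_zero,
      Finset.sum_const_zero, add_zero]
    refine Finset.sum_congr rfl fun l _ => ?_
    congr 1
    rw [Fin.sum_univ_add]
    have : ∀ m : Fin dm, L (Fin.castAdd dm i) (Fin.natAdd dp m) = 0 := fun m =>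
      hL _ _ (castAdd_lt_natAdd dp dm i m)
    simp [this]
  rw [key, Matrix.det_mul, Matrix.det_mul]
  have hLT : (L.submatrix (Fin.castAdd dm) (Fin.castAdd dm)).det =
      ∏ i : Fin dp, L (Fin.castAdd dm i) (Fin.castAdd dm i) := by
    rw [Matrix.det_of_lowerTriangular]
    · rfl
    · intro i j hij
      exact hL _ _ (by
        simp only [Fin.lt_def, Fin.coe_castAdd]; exact hij)
  rw [hLT]
  ring
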